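/- Let Z be an n×p real matrix such that ZᵀZ is invertible, let H = Z(ZᵀZ)⁻¹Zᵀ, and let D be the diagonal matrix with D_ii = H_ii. Assume H_ii ≠ 1 for all i. For each i, let Z_(i) and y_(i) denote Z and y ∈ ℝⁿ with the i-th row/entry removed, and assume Z_(i)ᵀZ_(i) is invertible. Then for every i, the leave-one-out prediction z_iᵀ(Z_(i)ᵀZ_(i))⁻¹Z_(i)ᵀy_(i) equals the i-th entry of (I−D)⁻¹(H−D)y. -/

import Mathlib

open Matrix

/-- The leave-one-out least squares prediction equals the `i`-th entry of
`(I - D)⁻¹ (H - D) y`, where `H = Z(ZᵀZ)⁻¹Zᵀ` and `D = diag(H₁₁,…,Hₙₙ)`. -/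
theorem loo_prediction_eq
    (n p : ℕ) (Z : Matrix (Fin n) (Fin p) ℝ) (y : Fin n → ℝ)
    (hZ : IsUnit (Zᵀ * Z).det)
    (H : Matrix (Fin n) (Fin n) ℝ) (hH : H = Z * (Zᵀ * Z)⁻¹ * Zᵀ)
    (D : Matrix (Fin n) (Fin n) ℝ) (hD : D = Matrix.diagonal fun i => H i i)
    (hdiag : ∀ i, H i i ≠ 1)
    (Zd : ∀ i : Fin n, Matrix {j : Fin n // j ≠ i} (Fin p) ℝ)
    (hZd : ∀ i, Zd i = Matrix.of fun j k => Z j.1 k)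
    (yd : ∀ i : Fin n, {j : Fin n // j ≠ i} → ℝ)
    (hyd : ∀ i, yd i = fun j => y j.1)
    (hZdi : ∀ i, IsUnit ((Zd i)ᵀ * Zd i).det) :
    ∀ i : Fin n,
      (fun k => Z i k) ⬝ᵥ (((Zd i)ᵀ * Zd i)⁻¹ *ᵥ ((Zd i)ᵀ *ᵥ yd i))
        = (((1 - D)⁻¹ * (H - D)) *ᵥ y) i := by
  intro i
  set A := Zᵀ * Z with hA
  have hA1 : A * A⁻¹ = 1 := Matrix.mul_nonsing_inv _ hZ
  set z : Fin p → ℝ := fun k => Z i k with hz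
  set h : ℝ := H i i with hh
  have hne : (1 : ℝ) - h ≠ 0 := sub_ne_zero.mpr fun e => hdiag i e.symm
  set b : Fin p → ℝ := (Zᵀ *ᵥ y) - y i • z with hb
  -- fact: row-sum over the subtype
  have subsum : ∀ f : Fin n → ℝ, (∑ j : {j : Fin n // j ≠ i}, f j.1) = (∑ j, f j) - f i := by
    intro f
    rw [← Finset.sum_subtype (Finset.univ.erase i) (p := fun j => j ≠ i)
      (by simp [Finset.mem_erase]) f, eq_sub_iff_add_eq, Finset.sum_erase_add]
    · simp
  -- fact1 : Aᵢ = A - z zᵀ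
  have fact1 : (Zd i)ᵀ * Zd i = A - Matrix.vecMulVec z z := by
    ext k l
    simp only [hZd, mul_apply, transpose_apply, of_apply, Matrix.sub_apply, vecMulVec_apply, hA, hz]
    rw [subsum fun j => Z j k * Z j l]
  -- fact2
  have fact2 : (Zd i)ᵀ *ᵥ yd i = b := by
    ext k
    simp only [hZd, hyd, mulVec, dotProduct, transpose_apply, of_apply, hb, Pi.sub_apply,
      Pi.smul_apply, smul_eq_mul, hz]
    rw [subsum fun j => Z j k * y j]
    ring
  -- fact3 : h = z ⬝ᵥ A⁻¹ z
  have fact3 : h = z ⬝ᵥ (A⁻¹ *ᵥ z) := by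
    rw [hh, hH, Matrix.mul_assoc]
    simp only [mul_apply, mulVec, dotProduct, transpose_apply, hA, hz]
  -- fact4
  have fact4 : z ⬝ᵥ (A⁻¹ *ᵥ (Zᵀ *ᵥ y)) = (H *ᵥ y) i := by
    rw [hH, ← mulVec_mulVec, ← mulVec_mulVec]
    rfl
  set s : ℝ := z ⬝ᵥ (A⁻¹ *ᵥ b) with hs
  set c : ℝ := s / (1 - h) with hc
  set w : Fin p → ℝ := A⁻¹ *ᵥ b + c • (A⁻¹ *ᵥ z) with hw
  have hvm : ∀ v : Fin p → ℝ, Matrix.vecMulVec z z *ᵥ v = (z ⬝ᵥ v) • z := by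
    intro v
    ext k
    simp [vecMulVec, mulVec, dotProduct, Finset.mul_sum, mul_assoc, Finset.sum_mul]
    ring_nf
  have hzw : z ⬝ᵥ w = s + c * h := by
    rw [hw, dotProduct_add, dotProduct_smul, ← hs, smul_eq_mul, fact3]
  have claim : ((Zd i)ᵀ * Zd i) *ᵥ w = b := by
    rw [fact1, sub_mulVec, hvm, hzw, hw, mulVec_add, mulVec_smul, mulVec_mulVec,
      mulVec_mulVec, hA1, one_mulVec, one_mulVec]
    have hc2 : s + c * h = c := by
      rw [hc]; field_simp; ring
    rw [hc2, add_sub_cancel_right]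
  have hsolve : ((Zd i)ᵀ * Zd i)⁻¹ *ᵥ ((Zd i)ᵀ *ᵥ yd i) = w := by
    rw [fact2, ← claim, mulVec_mulVec, Matrix.nonsing_inv_mul _ (hZdi i), one_mulVec]
  -- RHS computation
  have hDinv : (1 - D)⁻¹ = Matrix.diagonal fun j => (1 - H j j)⁻¹ := by
    have h1 : (1 : Matrix (Fin n) (Fin n) ℝ) - D = Matrix.diagonal fun j => 1 - H j j := by
      rw [hD]
      ext a b'
      by_cases hab : a = b' <;> simp [hab, Matrix.one_apply, Matrix.diagonal]
    rw [h1]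
    refine Matrix.inv_eq_right_inv ?_
    rw [Matrix.diagonal_mul_diagonal]
    have he : (fun j => (1 - H j j) * (1 - H j j)⁻¹) = fun _ => (1 : ℝ) := by
      funext j
      exact mul_inv_cancel₀ (sub_ne_zero.mpr fun e => hdiag j e.symm)
    rw [he, Matrix.diagonal_one]
  have hs' : s = (H *ᵥ y) i - y i * h := by
    rw [hs, hb, mulVec_sub, dotProduct_sub, fact4, mulVec_smul, dotProduct_smul,
      smul_eq_mul, fact3]
  rw [hsolve, hzw, ← mulVec_mulVec, hDinv, mulVec_diagonal, sub_mulVec, Pi.sub_apply,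
    hD, mulVec_diagonal, hc, hs']
  rw [← hh]
  field_simp
  ring
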